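/- The hypergroup with basis {k₀, k₁}, unit k₀, and relation k₁² = λ·k₀ + (1−λ)·k₁ arises from a fusion algebra f₁² = f₀ + n·f₁ (n ∈ ℕ) by rescaling if and only if λ is of the form λ = x with x = 1 + r/2 − r·√(1/4 + r⁻¹) for some r = n²/1 ∈ ℚ; in particular, for λ = 1/(2+√3) (so that 1−λ = (1+√3)/(2+√3)) there is no n ∈ ℕ with a fusion algebra f₁² = f₀ + n f₁ whose rescaled hypergroup has coefficient λ. -/

import Mathlib

/-- The two-element hypergroup with `k₁² = λ k₀ + (1-λ) k₁` arises from a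
fusion algebra `f₁² = f₀ + n f₁` (`n ∈ ℕ`, with Perron–Frobenius dimension `d > 0`,
`d² = 1 + n d`, and `λ = 1/d²`) by rescaling if and only if
`λ = 1 + r/2 - r * √(1/4 + r⁻¹)` for some rational `r` of the form `r = n²`.
In particular, for `λ = 1/(2+√3)` there is no `n ∈ ℕ` with such a fusion algebra. -/
theorem stmt5 :
    (∀ lam : ℝ, 0 < lam → lam < 1 →
      ((∃ (n : ℕ) (d : ℝ), 0 < d ∧ d ^ 2 = 1 + n * d ∧ lam = 1 / d ^ 2) ↔
        (∃ r : ℚ, (∃ n : ℕ, (r : ℝ) = (n : ℝ) ^ 2) ∧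
          lam = 1 + (r : ℝ) / 2 - (r : ℝ) * Real.sqrt (1 / 4 + ((r : ℝ))⁻¹)))) ∧
    ¬ ∃ (n : ℕ) (d : ℝ), 0 < d ∧ d ^ 2 = 1 + n * d ∧
        1 / (2 + Real.sqrt 3) = 1 / d ^ 2 := by
  constructor
  · intro lam hl0 hl1
    constructor
    · rintro ⟨n, d, hd, hfus, hlam⟩
      refine ⟨(n : ℚ) ^ 2, ⟨n, by push_cast; ring⟩, ?_⟩
      have hn : 1 ≤ n := by
        by_contra h
        push_neg at h
        interval_cases n
        · simp only [Nat.cast_zero, zero_mul, add_zero] at hfus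
          have hd1 : d = 1 := by nlinarith
          rw [hd1] at hlam
          norm_num at hlam
          linarith
      have hnR : (1 : ℝ) ≤ (n : ℝ) := by exact_mod_cast hn
      have hn0 : (n : ℝ) ≠ 0 := by positivity
      have hdn : (n : ℝ) < d := by nlinarith
      have hinner : (1 / 4 + (((((n : ℚ) ^ 2 : ℚ)) : ℝ))⁻¹) =
          (((n : ℝ) ^ 2 + 4)) / (2 * n) ^ 2 := by
        push_cast
        field_simp
        ring_nf
      have hroot : Real.sqrt (1 / 4 + (((((n : ℚ) ^ 2 : ℚ)) : ℝ))⁻¹) = (2 * d - n) / (2 * n) := by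
        rw [hinner, show (((n : ℝ) ^ 2 + 4) / (2 * n) ^ 2) = ((2 * d - n) / (2 * n)) ^ 2 by
          rw [div_pow]; congr 1; nlinarith]
        exact Real.sqrt_sq (div_nonneg (by nlinarith) (by positivity))
      have key : (1 : ℝ) / d ^ 2 = 1 + (n : ℝ) ^ 2 - n * d := by
        rw [div_eq_iff (by positivity)]
        linear_combination ((n : ℝ) * d - 1) * hfus
      rw [hroot, hlam, key]
      push_cast
      field_simp
      ring
    · rintro ⟨r, ⟨n, hr⟩, hlam⟩
      rcases Nat.eq_zero_or_pos n with h0 | hn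
      · exfalso
        rw [h0] at hr
        simp at hr
        rw [hr] at hlam
        norm_num at hlam
        linarith
      · have hnR : (1 : ℝ) ≤ (n : ℝ) := by exact_mod_cast hn
        have hs0 : (0 : ℝ) ≤ (n : ℝ) ^ 2 + 4 := by positivity
        set s := Real.sqrt ((n : ℝ) ^ 2 + 4) with hs
        have hs2 : s ^ 2 = (n : ℝ) ^ 2 + 4 := Real.sq_sqrt hs0
        have hspos : 0 < s := Real.sqrt_pos.mpr (by positivity)
        have hn0 : (n : ℝ) ≠ 0 := by positivity
        have hroot : Real.sqrt (1 / 4 + ((r : ℝ))⁻¹) = s / (2 * n) := by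
          rw [show (1 / 4 + ((r : ℝ))⁻¹) = (s / (2 * n)) ^ 2 by
            rw [hr, div_pow, hs2]
            field_simp
            ring_nf]
          exact Real.sqrt_sq (by positivity)
        have hdpos : 0 < ((n : ℝ) + s) / 2 := by positivity
        have hfus : (((n : ℝ) + s) / 2) ^ 2 = 1 + n * (((n : ℝ) + s) / 2) := by nlinarith
        refine ⟨n, ((n : ℝ) + s) / 2, hdpos, hfus, ?_⟩
        have key : (1 : ℝ) / (((n : ℝ) + s) / 2) ^ 2 =
            1 + (n : ℝ) ^ 2 - n * (((n : ℝ) + s) / 2) := by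
          rw [div_eq_iff (by positivity)]
          linear_combination ((n : ℝ) * (((n : ℝ) + s) / 2) - 1) * hfus
        rw [hlam, hroot, hr, key]
        field_simp
        ring
  · rintro ⟨n, d, hd, hfus, heq⟩
    have h3 : Real.sqrt 3 ^ 2 = 3 := Real.sq_sqrt (by norm_num)
    have h3pos : 0 < Real.sqrt 3 := Real.sqrt_pos.mpr (by norm_num)
    have h2s : (0 : ℝ) < 2 + Real.sqrt 3 := by positivity
    have hd2 : d ^ 2 = 2 + Real.sqrt 3 := by
      have := heq
      rw [div_eq_div_iff (ne_of_gt h2s) (by positivity : (d^2:ℝ) ≠ 0)] at this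
      linarith
    have hnd : (n : ℝ) * d = 1 + Real.sqrt 3 := by linarith [hfus, hd2]
    have hn0 : n ≠ 0 := by
      rintro rfl
      simp at hnd
      nlinarith
    have hnR : (1 : ℝ) ≤ (n : ℝ) := by exact_mod_cast Nat.one_le_iff_ne_zero.mpr hn0
    have key : ((n : ℝ) ^ 2) * (2 + Real.sqrt 3) = 4 + 2 * Real.sqrt 3 := by
      have h' : ((n : ℝ) * d) ^ 2 = (1 + Real.sqrt 3) ^ 2 := by rw [hnd]
      nlinarith [h', hd2]
    have hnn : ((n : ℝ) ^ 2 - 2) * (Real.sqrt 3 + 2) = 0 := by nlinarith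
    have hn2 : ((n : ℝ) ^ 2) = 2 := by
      rcases mul_eq_zero.mp hnn with h | h
      · linarith
      · nlinarith
    have hnat : (n ^ 2 : ℕ) = 2 := by exact_mod_cast hn2
    rcases le_or_gt n 1 with h | h
    · have : n ^ 2 ≤ 1 := Nat.pow_le_pow_left h 2
      omega
    · have : 2 ^ 2 ≤ n ^ 2 := Nat.pow_le_pow_left h 2
      omega
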